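/- Let G_T be a G-system at t₀, G_t ∈ G_T, and J ⊆ G_{t₀}. If J is G_t-mutation-reachable (i.e., there exists G_u ∈ G_T with J ⊆ G_u and G_u obtainable from G_t by a finite sequence of mutations), then the co-Bongartz completion T_J(G_t) is also obtainable from G_t by a finite sequence of mutations. -/

import Mathlib

/-- A `G`-system at `t₀` (Definition 5.1.1): a collection of ℤ-bases of ℤⁿ, indexed by `T`,
satisfying the Mutation Condition, the Co-Bongartz Completion Condition and the
Uniqueness Condition. -/
structure GSystem (n : ℕ) (T : Type) (t₀ : T) where
  g : T → Fin n → (Fin n → ℤ)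
  indep : ∀ t, LinearIndependent ℤ (g t)
  span : ∀ t, Submodule.span ℤ (Set.range (g t)) = ⊤
  mutation : ∀ (t : T) (k : Fin n), ∃ t₁ : T,
    Set.range (g t) ∩ Set.range (g t₁) = Set.range (g t) \ {g t k}
  coBongartz : ∀ (t : T) (J : Set (Fin n → ℤ)), J ⊆ Set.range (g t₀) →
    ∃ t' : T, J ⊆ Set.range (g t') ∧
      ∀ (k : Fin n) (r : Fin n → ℤ), g t k = ∑ i, r i • g t' i →
        ∀ i, g t' i ∉ J → 0 ≤ r i
  uniqueness : ∀ (u v : T) (I I' : Finset (Fin n)) (r r' : Fin n → ℤ),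
    (∀ i ∈ I, 0 < r i) → (∀ j ∈ I', 0 < r' j) →
    (∑ i ∈ I, r i • g u i) = (∑ j ∈ I', r' j • g v j) →
    ∃ σ : Fin n → Fin n, Set.BijOn σ ↑I' ↑I ∧
      ∀ j ∈ I', r' j = r (σ j) ∧ g v j = g u (σ j)

/-- `G_{t'}` is a co-Bongartz completion of `J` with respect to `G_t`
(conditions (a) and (b) of Proposition-Definition 5.1.4). -/
def GSystem.IsCoB {n : ℕ} {T : Type} {t₀ : T} (S : GSystem n T t₀)
    (J : Set (Fin n → ℤ)) (t t' : T) : Prop :=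
  J ⊆ Set.range (S.g t') ∧
  ∀ (k : Fin n) (r : Fin n → ℤ), S.g t k = ∑ i, r i • S.g t' i →
    ∀ i, S.g t' i ∉ J → 0 ≤ r i

/-- `G_{t'}` is the mutation of `G_t` at `g_{k;t}`, i.e.
`G_t ∩ G_{t'} = G_t \ {g_{k;t}}` (Proposition-Definition 5.1.3). -/
def GSystem.IsMutationAt {n : ℕ} {T : Type} {t₀ : T} (S : GSystem n T t₀)
    (t t' : T) (k : Fin n) : Prop :=
  Set.range (S.g t) ∩ Set.range (S.g t') = Set.range (S.g t) \ {S.g t k}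

/-- A single step between bases of the `G`-system: either they are equal as
sets (identified bases) or one is a mutation of the other. -/
def GSystem.Step {n : ℕ} {T : Type} {t₀ : T} (S : GSystem n T t₀) (a b : T) : Prop :=
  Set.range (S.g a) = Set.range (S.g b) ∨ ∃ k : Fin n, S.IsMutationAt a b k


namespace GSystem

variable {n : ℕ} {T : Type} {t₀ : T}

lemma inj (S : GSystem n T t₀) (t : T) : Function.Injective (S.g t) :=
  (S.indep t).injective

noncomputable def basis (S : GSystem n T t₀) (t : T) : Module.Basis (Fin n) ℤ (Fin n → ℤ) :=
  Module.Basis.mk (S.indep t) (S.span t).ge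

lemma basis_apply (S : GSystem n T t₀) (t : T) (i : Fin n) : S.basis t i = S.g t i := by
  simp [basis]

lemma sum_repr (S : GSystem n T t₀) (t : T) (y : Fin n → ℤ) :
    ∑ i, (S.basis t).repr y i • S.g t i = y := by
  conv_rhs => rw [← Module.Basis.sum_repr (S.basis t) y]
  exact Finset.sum_congr rfl fun i _ => by rw [basis_apply]

lemma ncard_range (S : GSystem n T t₀) (t : T) : (Set.range (S.g t)).ncard = n := by
  rw [← Nat.card_coe_set_eq, Nat.card_range_of_injective (S.inj t), Nat.card_eq_fintype_card,
    Fintype.card_fin]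

/-- The core "matching" lemma: if a vector has expansions in two bases of the system,
both with nonnegative coefficients off `J`, and `J` is contained in both bases,
then any basis vector appearing with nonzero coefficient off `J` in the first
expansion belongs to the second basis. -/
lemma matching (S : GSystem n T t₀) {J : Set (Fin n → ℤ)} {a b : T}
    (hJa : J ⊆ Set.range (S.g a)) (hJb : J ⊆ Set.range (S.g b))
    {r r' : Fin n → ℤ}
    (hra : ∀ i, S.g a i ∉ J → 0 ≤ r i) (hrb : ∀ j, S.g b j ∉ J → 0 ≤ r' j)
    (heq : ∑ i, r i • S.g a i = ∑ j, r' j • S.g b j)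
    {i : Fin n} (hi : r i ≠ 0) (hiJ : S.g a i ∉ J) :
    S.g a i ∈ Set.range (S.g b) := by
  classical
  have exA : ∀ j : Fin n, ∃ i', r' j < 0 → S.g a i' = S.g b j := by
    intro j
    by_cases h : r' j < 0
    · have hJ : S.g b j ∈ J := by
        by_contra hc; exact absurd (hrb j hc) (not_le.2 h)
      obtain ⟨i', hi'⟩ := hJa hJ
      exact ⟨i', fun _ => hi'⟩
    · exact ⟨i, fun h' => absurd h' h⟩
  choose ι hι using exA
  have exB : ∀ i' : Fin n, ∃ j, r i' < 0 → S.g b j = S.g a i' := by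
    intro i'
    by_cases h : r i' < 0
    · have hJ : S.g a i' ∈ J := by
        by_contra hc; exact absurd (hra i' hc) (not_le.2 h)
      obtain ⟨j, hj⟩ := hJb hJ
      exact ⟨j, fun _ => hj⟩
    · exact ⟨i, fun h' => absurd h' h⟩
  choose κ hκ using exB
  set Bneg : Finset (Fin n) := Finset.univ.filter (fun j => r' j < 0) with hBneg
  set Aneg : Finset (Fin n) := Finset.univ.filter (fun i' => r i' < 0) with hAneg
  set s : Fin n → ℤ := fun i' => max (r i') 0 + ∑ j ∈ Bneg, if ι j = i' then -r' j else 0 with hs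
  set s' : Fin n → ℤ := fun j' => max (r' j') 0 + ∑ i' ∈ Aneg, if κ i' = j' then -r i' else 0 with hs'
  -- an auxiliary splitting computation
  have hsplit : ∀ (c : Fin n → ℤ) (v : Fin n → Fin n → ℤ),
      ∑ x, max (c x) 0 • v x
        = (∑ x, c x • v x) + ∑ x ∈ Finset.univ.filter (fun x => c x < 0), (-c x) • v x := by
    intro c v
    rw [Finset.sum_filter, ← Finset.sum_add_distrib]
    refine Finset.sum_congr rfl fun x _ => ?_
    split_ifs with h
    · rw [← add_smul]; congr 1; omega
    · rw [add_zero]; congr 1; omega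
  have swap : ∀ (c : Fin n → ℤ) (f : Fin n → Fin n) (B : Finset (Fin n)) (v : Fin n → Fin n → ℤ),
      ∑ x, (∑ j ∈ B, if f j = x then c j else 0) • v x = ∑ j ∈ B, c j • v (f j) := by
    intro c f B v
    simp only [Finset.sum_smul]
    rw [Finset.sum_comm]
    refine Finset.sum_congr rfl fun j _ => ?_
    have : ∀ x, (if f j = x then c j else 0) • v x = if f j = x then c j • v x else 0 := by
      intro x; split <;> simp
    simp only [this]
    rw [Finset.sum_ite_eq]
    simp
  have hL : ∑ x, s x • S.g a x
      = (∑ x, r x • S.g a x) + (∑ x ∈ Aneg, (-r x) • S.g a x) + ∑ j ∈ Bneg, (-r' j) • S.g b j := by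
    simp only [hs, add_smul, Finset.sum_add_distrib]
    rw [hsplit r (S.g a), swap (fun j => -r' j) ι Bneg (S.g a)]
    congr 1
    refine Finset.sum_congr rfl fun j hj => ?_
    rw [hι j (Finset.mem_filter.1 hj).2]
  have hR : ∑ x, s' x • S.g b x
      = (∑ x, r' x • S.g b x) + (∑ j ∈ Bneg, (-r' j) • S.g b j) + ∑ x ∈ Aneg, (-r x) • S.g a x := by
    simp only [hs', add_smul, Finset.sum_add_distrib]
    rw [hsplit r' (S.g b), swap (fun x => -r x) κ Aneg (S.g b)]
    congr 1
    refine Finset.sum_congr rfl fun x hx => ?_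
    rw [hκ x (Finset.mem_filter.1 hx).2]
  have key : ∑ x, s x • S.g a x = ∑ x, s' x • S.g b x := by
    rw [hL, hR, heq]; abel
  have hsnn : ∀ x, 0 ≤ s x := by
    intro x
    refine add_nonneg (le_max_right _ _) (Finset.sum_nonneg fun j hj => ?_)
    split
    · have : r' j < 0 := (Finset.mem_filter.1 hj).2; omega
    · exact le_refl 0
  have hs'nn : ∀ x, 0 ≤ s' x := by
    intro x
    refine add_nonneg (le_max_right _ _) (Finset.sum_nonneg fun j hj => ?_)
    split
    · have : r j < 0 := (Finset.mem_filter.1 hj).2; omega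
    · exact le_refl 0
  set I : Finset (Fin n) := Finset.univ.filter (fun x => 0 < s x) with hI
  set I' : Finset (Fin n) := Finset.univ.filter (fun x => 0 < s' x) with hI'
  have hIL : ∑ x ∈ I, s x • S.g a x = ∑ x, s x • S.g a x := by
    refine Finset.sum_subset (Finset.subset_univ _) fun x _ hx => ?_
    have h1 := hsnn x
    have h2 : ¬ 0 < s x := by simpa [hI] using hx
    have : s x = 0 := by omega
    simp [this]
  have hIR : ∑ x ∈ I', s' x • S.g b x = ∑ x, s' x • S.g b x := by
    refine Finset.sum_subset (Finset.subset_univ _) fun x _ hx => ?_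
    have h1 := hs'nn x
    have h2 : ¬ 0 < s' x := by simpa [hI'] using hx
    have : s' x = 0 := by omega
    simp [this]
  obtain ⟨σ, hbij, hprop⟩ := S.uniqueness a b I I' s s'
    (fun x hx => (Finset.mem_filter.1 hx).2) (fun x hx => (Finset.mem_filter.1 hx).2)
    (by rw [hIL, hIR]; exact key)
  have hri : 0 < r i := lt_of_le_of_ne (hra i hiJ) (Ne.symm hi)
  have hiI : i ∈ I := by
    refine Finset.mem_filter.2 ⟨Finset.mem_univ _, ?_⟩
    calc (0:ℤ) < r i := hri
    _ ≤ max (r i) 0 := le_max_left _ _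
    _ ≤ s i := le_add_of_nonneg_right (Finset.sum_nonneg fun j hj => by
        split
        · have : r' j < 0 := (Finset.mem_filter.1 hj).2; omega
        · exact le_refl 0)
  obtain ⟨j, hjI', hj⟩ := hbij.surjOn (by exact_mod_cast hiI : i ∈ (↑I : Set (Fin n)))
  exact ⟨j, by rw [(hprop j hjI').2, hj]⟩

variable {n : ℕ} {T : Type} {t₀ : T}

open Finset in
lemma core (S : GSystem n T t₀) {J : Set (Fin n → ℤ)} {a b w w' : T}
    (hw : S.IsCoB J a w) (hw' : S.IsCoB J b w')
    (K : Finset (Fin n)) (hcom : ∀ i ∈ K, S.g a i ∈ Set.range (S.g b)) :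
    (Finset.univ.filter (fun l => S.g w l ∉ Set.range (S.g w'))).card ≤ n - K.card := by
  classical
  set Df : Finset (Fin n) := Finset.univ.filter (fun l => S.g w l ∉ Set.range (S.g w')) with hDf
  -- vanishing of coordinates
  have vanish : ∀ i ∈ K, ∀ l ∈ Df, (S.basis w).repr (S.g a i) l = 0 := by
    intro i hi l hl
    have hlr : S.g w l ∉ Set.range (S.g w') := (Finset.mem_filter.1 hl).2
    have hlJ : S.g w l ∉ J := fun h => hlr (hw'.1 h)
    by_contra hne
    obtain ⟨k', hk'⟩ := hcom i hi
    refine hlr (S.matching hw.1 hw'.1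
      (r := fun x => (S.basis w).repr (S.g a i) x)
      (r' := fun x => (S.basis w').repr (S.g a i) x) ?_ ?_ ?_ hne hlJ)
    · exact hw.2 i _ (S.sum_repr w (S.g a i)).symm
    · intro x hx
      refine hw'.2 k' _ ?_ x hx
      rw [hk']; exact (S.sum_repr w' (S.g a i)).symm
    · rw [S.sum_repr w (S.g a i), S.sum_repr w' (S.g a i)]
  -- rank argument
  have hcard : K.card ≤ (Dfᶜ : Finset (Fin n)).card := by
    set C : Finset (Fin n) := Dfᶜ with hC
    let e : ({x // x ∈ C} → ℤ) →ₗ[ℤ] (Fin n → ℤ) :=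
      { toFun := fun f j => if h : j ∈ C then f ⟨j, h⟩ else 0
        map_add' := by intro f g; funext j; by_cases h : j ∈ C <;> simp [h]
        map_smul' := by intro c f; funext j; by_cases h : j ∈ C <;> simp [h] }
    let E : (Fin n → ℤ) ≃ₗ[ℤ] (Fin n → ℤ) :=
      (S.basis w).repr.trans (Finsupp.linearEquivFunOnFinite ℤ ℤ (Fin n))
    have hbase : LinearIndependent ℤ (fun i : {x // x ∈ K} => S.g a ↑i) :=
      (S.indep a).comp _ Subtype.val_injective
    have hF : LinearIndependent ℤ (fun i : {x // x ∈ K} => E (S.g a ↑i)) :=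
      hbase.map' E.toLinearMap E.ker
    set v : {x // x ∈ K} → ({x // x ∈ C} → ℤ) :=
      fun i x => (S.basis w).repr (S.g a ↑i) ↑x with hv
    have hev : (fun i : {x // x ∈ K} => E (S.g a ↑i)) = ⇑e ∘ v := by
      funext i
      funext j
      show (S.basis w).repr (S.g a ↑i) j = _
      by_cases h : j ∈ C
      · simp [e, v, h]
      · have hjD : j ∈ Df := by
          simp only [hC, Finset.mem_compl, not_not] at h; exact h
        simp only [Function.comp_apply]
        rw [show e (v i) j = 0 from by simp [e, h]]
        exact vanish ↑i i.2 j hjD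
    have hvind : LinearIndependent ℤ v := by
      rw [hev] at hF
      exact LinearIndependent.of_comp e hF
    have := hvind.fintype_card_le_finrank
    rw [Module.finrank_fintype_fun_eq_card] at this
    simpa [Fintype.card_coe] using this
  rw [Finset.card_compl, Fintype.card_fin] at hcard
  have h2 : Df.card ≤ n := by
    simpa using Finset.card_le_univ Df
  omega

lemma range_eq_of_subset (S : GSystem n T t₀) {w w' : T}
    (h : Set.range (S.g w) ⊆ Set.range (S.g w')) :
    Set.range (S.g w) = Set.range (S.g w') := by
  refine Set.eq_of_subset_of_ncard_le h ?_ (Set.finite_range _)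
  rw [S.ncard_range, S.ncard_range]

/-- Two co-Bongartz completions of `J` with respect to bases with the same
underlying set (in particular the same basis) have the same range. -/
lemma coB_range_eq (S : GSystem n T t₀) {J : Set (Fin n → ℤ)} {a b w w' : T}
    (hw : S.IsCoB J a w) (hw' : S.IsCoB J b w')
    (hab : ∀ i, S.g a i ∈ Set.range (S.g b)) :
    Set.range (S.g w) = Set.range (S.g w') := by
  classical
  have h := S.core hw hw' Finset.univ (fun i _ => hab i)
  rw [Finset.card_univ, Fintype.card_fin, Nat.sub_self, Nat.le_zero, Finset.card_eq_zero] at h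
  refine S.range_eq_of_subset ?_
  rintro x ⟨m, rfl⟩
  by_contra hm
  have : m ∈ (∅ : Finset (Fin n)) := by
    rw [← h]; exact Finset.mem_filter.2 ⟨Finset.mem_univ _, hm⟩
  simp at this

/-- Theorem 5.2.1 (main part): co-Bongartz completions with respect to two
bases related by a single step are themselves related by a single step. -/
lemma step_coB (S : GSystem n T t₀) {J : Set (Fin n → ℤ)} {a b w w' : T}
    (hab : S.Step a b) (hw : S.IsCoB J a w) (hw' : S.IsCoB J b w') : S.Step w w' := by
  classical
  rcases hab with hab | ⟨k, hab⟩
  · exact Or.inl (S.coB_range_eq hw hw' (fun i => hab ▸ ⟨i, rfl⟩))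
  · set K : Finset (Fin n) := Finset.univ.erase k with hK
    have hcom : ∀ i ∈ K, S.g a i ∈ Set.range (S.g b) := by
      intro i hi
      have hik : i ≠ k := (Finset.mem_erase.1 hi).1
      have : S.g a i ∈ Set.range (S.g a) ∩ Set.range (S.g b) := by
        rw [hab]
        exact ⟨⟨i, rfl⟩, by simp [(S.inj a).ne hik]⟩
      exact this.2
    have hcard := S.core hw hw' K hcom
    rw [hK, Finset.card_erase_of_mem (Finset.mem_univ _), Finset.card_univ,
      Fintype.card_fin] at hcard
    have hn : 0 < n := k.pos
    have h1 : (Finset.univ.filter (fun l => S.g w l ∉ Set.range (S.g w'))).card ≤ 1 := by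
      omega
    set Df := Finset.univ.filter (fun l => S.g w l ∉ Set.range (S.g w')) with hDf
    rcases Nat.le_one_iff_eq_zero_or_eq_one.1 h1 with h0 | h0
    · rw [Finset.card_eq_zero] at h0
      refine Or.inl (S.range_eq_of_subset ?_)
      rintro x ⟨m, rfl⟩
      by_contra hm
      have : m ∈ (∅ : Finset (Fin n)) := by
        rw [← h0]; exact Finset.mem_filter.2 ⟨Finset.mem_univ _, hm⟩
      simp at this
    · obtain ⟨l, hl⟩ := Finset.card_eq_one.1 h0
      refine Or.inr ⟨l, ?_⟩
      have hlD : l ∈ Df := hl ▸ Finset.mem_singleton_self l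
      have hlr : S.g w l ∉ Set.range (S.g w') := (Finset.mem_filter.1 hlD).2
      ext x
      constructor
      · rintro ⟨⟨m, rfl⟩, hx'⟩
        refine ⟨⟨m, rfl⟩, ?_⟩
        intro hxl
        rw [Set.mem_singleton_iff] at hxl
        exact hlr (hxl ▸ hx')
      · rintro ⟨⟨m, rfl⟩, hxl⟩
        refine ⟨⟨m, rfl⟩, ?_⟩
        have hml : m ≠ l := fun h => hxl (by rw [h]; rfl)
        by_contra hm
        have : m ∈ Df := Finset.mem_filter.2 ⟨Finset.mem_univ _, hm⟩
        rw [hl, Finset.mem_singleton] at this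
        exact hml this

lemma step_symm (S : GSystem n T t₀) : Symmetric S.Step := by
  intro a b hab
  rcases hab with h | ⟨k, h⟩
  · exact Or.inl h.symm
  · have hn : 0 < n := k.pos
    have hk : S.g a k ∉ Set.range (S.g b) := by
      intro hk
      have : S.g a k ∈ Set.range (S.g a) ∩ Set.range (S.g b) := ⟨⟨k, rfl⟩, hk⟩
      rw [h] at this
      exact this.2 rfl
    have hfin : (Set.range (S.g a) ∩ Set.range (S.g b)).Finite :=
      (Set.finite_range _).inter_of_left _
    have hninter : (Set.range (S.g a) ∩ Set.range (S.g b)).ncard = n - 1 := by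
      have hmem : S.g a k ∈ Set.range (S.g a) := ⟨k, rfl⟩
      rw [h, Set.ncard_diff_singleton_of_mem hmem, S.ncard_range]
    have h1 : Set.range (S.g b) \ Set.range (S.g a)
        = Set.range (S.g b) \ (Set.range (S.g a) ∩ Set.range (S.g b)) := by
      ext x; simp only [Set.mem_diff, Set.mem_inter_iff]; tauto
    have hE : (Set.range (S.g b) \ Set.range (S.g a)).ncard = 1 := by
      rw [h1, Set.ncard_diff Set.inter_subset_right hfin, hninter, S.ncard_range]
      omega
    obtain ⟨y, hy⟩ := Set.ncard_eq_one.1 hE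
    have hyb : y ∈ Set.range (S.g b) := by
      have : y ∈ Set.range (S.g b) \ Set.range (S.g a) := by rw [hy]; rfl
      exact this.1
    obtain ⟨k', hk'⟩ := hyb
    refine Or.inr ⟨k', ?_⟩
    ext x
    constructor
    · rintro ⟨hxb, hxa⟩
      refine ⟨hxb, ?_⟩
      intro hxk
      rw [Set.mem_singleton_iff] at hxk
      have : x ∈ Set.range (S.g b) \ Set.range (S.g a) := by
        rw [hy, Set.mem_singleton_iff, hxk, hk']
      exact this.2 hxa
    · rintro ⟨hxb, hxk⟩
      refine ⟨hxb, ?_⟩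
      by_contra hxa
      have : x ∈ Set.range (S.g b) \ Set.range (S.g a) := ⟨hxb, hxa⟩
      rw [hy, Set.mem_singleton_iff] at this
      exact hxk (by rw [Set.mem_singleton_iff, this, ← hk'])

lemma isCoB_self (S : GSystem n T t₀) {J : Set (Fin n → ℤ)} {u : T}
    (h : J ⊆ Set.range (S.g u)) : S.IsCoB J u u := by
  refine ⟨h, fun k r hr i _ => ?_⟩
  classical
  have hsk : ∑ x, (Pi.single k 1 : Fin n → ℤ) x • S.g u x = S.g u k := by
    rw [Finset.sum_eq_single k]
    · simp
    · intro x _ hx; simp [Pi.single_eq_of_ne hx]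
    · intro hx; exact absurd (Finset.mem_univ k) hx
  have h0 : ∑ x, (r x - (Pi.single k 1 : Fin n → ℤ) x) • S.g u x = 0 := by
    simp only [sub_smul, Finset.sum_sub_distrib]
    rw [← hr, hsk, sub_self]
  have hz := (Fintype.linearIndependent_iff.mp (S.indep u)) _ h0 i
  have hri : r i = (Pi.single k 1 : Fin n → ℤ) i := sub_eq_zero.mp hz
  rw [hri]
  by_cases hik : i = k
  · subst hik; simp
  · simp [Pi.single_eq_of_ne hik]

lemma chain (S : GSystem n T t₀) {J : Set (Fin n → ℤ)} (hJ : J ⊆ Set.range (S.g t₀))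
    {t u : T} (h : Relation.ReflTransGen S.Step t u) {w : T} (hw : S.IsCoB J t w) :
    ∀ w', S.IsCoB J u w' → Relation.ReflTransGen S.Step w w' := by
  induction h with
  | refl =>
    intro w' hw'
    exact Relation.ReflTransGen.single
      (Or.inl (S.coB_range_eq hw hw' (fun i => ⟨i, rfl⟩)))
  | @tail b c _hab hbc ih =>
    intro w' hw'
    obtain ⟨wb, hwb⟩ := S.coBongartz b J hJ
    exact (ih wb hwb).tail (S.step_coB hbc hwb hw')

end GSystem

/-- Theorem 5.2.2: if `J ⊆ G_{t₀}` is `G_t`-mutation-reachable (there is a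
basis `G_u` of the system containing `J` obtained from `G_t` by a finite
sequence of mutations), then the co-Bongartz completion `T_J(G_t)` is also
obtainable from `G_t` by a finite sequence of mutations. -/
theorem stmt16 {n : ℕ} {T : Type} {t₀ : T} (S : GSystem n T t₀) (t : T)
    (J : Set (Fin n → ℤ)) (hJ : J ⊆ Set.range (S.g t₀))
    (hreach : ∃ u : T, J ⊆ Set.range (S.g u) ∧ Relation.ReflTransGen S.Step t u)
    (t' : T) (ht' : S.IsCoB J t t') :
    ∃ v : T, Relation.ReflTransGen S.Step t v ∧
      Set.range (S.g v) = Set.range (S.g t') := by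
  obtain ⟨u, hJu, hru⟩ := hreach
  have hcu : S.IsCoB J u u := S.isCoB_self hJu
  have h1 : Relation.ReflTransGen S.Step t' u := S.chain hJ hru ht' u hcu
  have h2 : Relation.ReflTransGen S.Step u t' :=
    (have : Std.Symm S.Step := ⟨fun _ _ h => S.step_symm h⟩; Std.Symm.symm _ _ h1)
  exact ⟨t', hru.trans h2, rfl⟩
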